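/- arXiv:1203.6615 — 3 statements merged into one kernel-verified Lean document; each statement's English description precedes it below -/
import Mathlib

section
/- Let K be a field of characteristic zero and H ∈ K[x]ⁿ. If there exists j with 1 ≤ j ≤ r such that the Jacobian with respect to y⁽¹⁾ of (JH)|_{x=y⁽ʳ⁾} ··· (JH)|_{x=y⁽ʲ⁺¹⁾} · H(y⁽ʲ⁾ + H(··· + H(y⁽¹⁾)···)) vanishes, then (JH)|_{x=y⁽ʳ⁾}·(JH)|_{x=y⁽ʳ⁻¹⁾}···(JH)|_{x=y⁽¹⁾} = 0. -/
open MvPolynomial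

/-- Substitute the `i`-th fresh tuple of indeterminates for `x` in every entry of `M`. -/
noncomputable def substN {K : Type} [CommRing K] {n m : ℕ}
    (M : Matrix (Fin m) (Fin m) (MvPolynomial (Fin n) K)) (i : ℕ) :
    Matrix (Fin m) (Fin m) (MvPolynomial (ℕ × Fin n) K) :=
  M.map (rename fun k => (i, k))

/-- The product `M|_{x=y⁽ʳ⁾} ⬝ ⋯ ⬝ M|_{x=y⁽¹⁾}` (fresh tuples indexed `r-1, …, 0`). -/
noncomputable def prodSubst {K : Type} [CommRing K] {n m : ℕ}
    (M : Matrix (Fin m) (Fin m) (MvPolynomial (Fin n) K)) (r : ℕ) :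
    Matrix (Fin m) (Fin m) (MvPolynomial (ℕ × Fin n) K) :=
  ((List.range r).reverse.map (substN M)).prod

/-- The Jacobian matrix `(∂H_i/∂x_j)` of a polynomial map `H`. -/
noncomputable def jac {K : Type} [CommRing K] {n : ℕ}
    (H : Fin n → MvPolynomial (Fin n) K) :
    Matrix (Fin n) (Fin n) (MvPolynomial (Fin n) K) :=
  Matrix.of fun i j => pderiv j (H i)

/-- The nested composition `H(y⁽ʲ⁾ + H(y⁽ʲ⁻¹⁾ + ⋯ + H(y⁽¹⁾)⋯))`,
with the fresh tuple `y⁽ⁱ⁾` realized as the variables `X (i-1, ·)`. -/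
noncomputable def nest {K : Type} [CommRing K] {n : ℕ}
    (H : Fin n → MvPolynomial (Fin n) K) : ℕ → Fin n → MvPolynomial (ℕ × Fin n) K
  | 0 => 0
  | j + 1 => fun i => aeval (fun k => X (j, k) + nest H j k) (H i)

/-- The product `(JH)|_{x=y⁽ʳ⁾} ⬝ ⋯ ⬝ (JH)|_{x=y⁽ʲ⁺¹⁾}` (fresh tuples indexed `r-1, …, j`). -/
noncomputable def tailProd {K : Type} [CommRing K] {n : ℕ}
    (H : Fin n → MvPolynomial (Fin n) K) (j r : ℕ) :
    Matrix (Fin n) (Fin n) (MvPolynomial (ℕ × Fin n) K) :=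
  (((List.range' j (r - j)).reverse).map (substN (jac H))).prod

section Aux

variable {K : Type} [CommRing K] {n : ℕ}

/-- Chain rule for `aeval`. -/
lemma pderiv_aeval_chain (g : Fin n → MvPolynomial (ℕ × Fin n) K)
    (x : ℕ × Fin n) (p : MvPolynomial (Fin n) K) :
    pderiv x (aeval g p) =
      ∑ l : Fin n, aeval g (pderiv l p) * pderiv x (g l) := by
  classical
  induction p using MvPolynomial.induction_on with
  | C a => simp
  | add p q hp hq =>
    rw [map_add, map_add, hp, hq, ← Finset.sum_add_distrib]
    exact Finset.sum_congr rfl fun l _ => by rw [map_add, map_add, add_mul]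
  | mul_X p i hp =>
    have hR : ∀ l : Fin n, aeval g (pderiv l (p * X i)) * pderiv x (g l)
        = aeval g (pderiv l p) * pderiv x (g l) * g i
          + (if i = l then aeval g p * pderiv x (g l) else 0) := by
      intro l
      rw [pderiv_mul, map_add, map_mul, map_mul, aeval_X, add_mul]
      congr 1
      · ring
      · rw [pderiv_X, Pi.single_apply]
        split_ifs with h
        · simp
        · simp
    rw [map_mul, aeval_X, pderiv_mul, hp, Finset.sum_mul,
      Finset.sum_congr rfl (fun l _ => hR l), Finset.sum_add_distrib,
      Finset.sum_ite_eq Finset.univ i (fun l => aeval g p * pderiv x (g l))]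
    simp

/-- `pderiv` at a variable outside the range of a coordinate rename vanishes. -/
lemma pderiv_rename_ne (i : ℕ) (x : ℕ × Fin n) (hx : x.1 ≠ i)
    (p : MvPolynomial (Fin n) K) :
    pderiv x (rename (fun k : Fin n => ((i, k) : ℕ × Fin n)) p) = 0 := by
  have : (rename (fun k : Fin n => ((i, k) : ℕ × Fin n))) p
      = aeval (fun k : Fin n => (X (i, k) : MvPolynomial (ℕ × Fin n) K)) p := by
    rw [← aeval_X_left_apply ((rename fun k : Fin n => ((i, k) : ℕ × Fin n)) p), aeval_rename,
      Function.comp_def]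
  rw [this, pderiv_aeval_chain]
  refine Finset.sum_eq_zero fun l _ => ?_
  rw [pderiv_X_of_ne, mul_zero]
  intro h
  exact hx (by rw [← h])

/-- `nest H m` only involves variables with first coordinate `< m`. -/
lemma aeval_nest_eq (H : Fin n → MvPolynomial (Fin n) K)
    (g : ℕ × Fin n → MvPolynomial (ℕ × Fin n) K) :
    ∀ m, (∀ p : ℕ × Fin n, p.1 < m → g p = X p) →
      ∀ k, aeval g (nest H m k) = nest H m k := by
  intro m
  induction m with
  | zero => intro _ k; simp [nest]
  | succ m ih =>
    intro hg k
    show aeval g (aeval (fun l => X (m, l) + nest H m l) (H k)) = _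
    rw [← AlgHom.comp_apply, comp_aeval]
    have hl : ∀ l : Fin n, aeval g ((X ((m : ℕ), l) : MvPolynomial (ℕ × Fin n) K)
        + nest H m l) = X ((m : ℕ), l) + nest H m l := by
      intro l
      rw [map_add, aeval_X, hg (m, l) (Nat.lt_succ_self m),
        ih (fun p hp => hp.trans (Nat.lt_succ_self m) |> hg p) l]
    simp only [hl]
    rfl

/-- The Jacobian of `H` evaluated at `y⁽ⁱ⁾ + nest H i`. -/
noncomputable def shiftJac (H : Fin n → MvPolynomial (Fin n) K) (i : ℕ) :
    Matrix (Fin n) (Fin n) (MvPolynomial (ℕ × Fin n) K) :=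
  (jac H).map (aeval (fun k : Fin n => X (i, k) + nest H i k))

/-- The product `shiftJac (j-1) ⬝ ⋯ ⬝ shiftJac 0`. -/
noncomputable def headProd (H : Fin n → MvPolynomial (Fin n) K) (j : ℕ) :
    Matrix (Fin n) (Fin n) (MvPolynomial (ℕ × Fin n) K) :=
  ((List.range j).reverse.map (shiftJac H)).prod

lemma headProd_succ (H : Fin n → MvPolynomial (Fin n) K) (j : ℕ) :
    headProd H (j + 1) = shiftJac H j * headProd H j := by
  rw [headProd, List.range_succ, List.reverse_append, List.map_append, List.prod_append]
  simp [headProd]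

lemma keyD (H : Fin n → MvPolynomial (Fin n) K) :
    ∀ (j : ℕ) (m k : Fin n),
      pderiv ((0 : ℕ), k) ((X ((j : ℕ), m) : MvPolynomial (ℕ × Fin n) K) + nest H j m)
        = headProd H j m k := by
  classical
  intro j
  induction j with
  | zero =>
    intro m k
    show pderiv ((0 : ℕ), k) ((X ((0 : ℕ), m) : MvPolynomial (ℕ × Fin n) K) + 0)
      = (1 : Matrix (Fin n) (Fin n) (MvPolynomial (ℕ × Fin n) K)) m k
    rw [add_zero, pderiv_X, Matrix.one_apply, Pi.single_apply]
    by_cases h : m = k <;> simp [h, Prod.ext_iff, eq_comm]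
  | succ j ih =>
    intro m k
    have h1 : pderiv ((0 : ℕ), k) ((X (((j : ℕ) + 1, m)) : MvPolynomial (ℕ × Fin n) K)) = 0 :=
      pderiv_X_of_ne (by simp)
    rw [map_add, h1, zero_add]
    show pderiv ((0 : ℕ), k) (aeval (fun l => X ((j : ℕ), l) + nest H j l) (H m)) = _
    rw [pderiv_aeval_chain, headProd_succ, Matrix.mul_apply]
    exact Finset.sum_congr rfl fun l _ => by rw [ih l k]; rfl

/-- The triangular substitution `y⁽ⁱ⁾ ↦ y⁽ⁱ⁾ + nest H i` for `i < j`. -/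
noncomputable def Fsub (H : Fin n → MvPolynomial (Fin n) K) (j : ℕ) :
    ℕ × Fin n → MvPolynomial (ℕ × Fin n) K :=
  fun p => if p.1 < j then X p + nest H p.1 p.2 else X p

lemma Fsub_zero (H : Fin n → MvPolynomial (Fin n) K) :
    Fsub H 0 = (X : ℕ × Fin n → MvPolynomial (ℕ × Fin n) K) := by
  funext p; simp [Fsub]

/-- One step of the triangular substitution. -/
noncomputable def fone (H : Fin n → MvPolynomial (Fin n) K) (j : ℕ) :
    ℕ × Fin n → MvPolynomial (ℕ × Fin n) K :=
  fun p => if p.1 = j then X p + nest H j p.2 else X p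

noncomputable def gone (H : Fin n → MvPolynomial (Fin n) K) (j : ℕ) :
    ℕ × Fin n → MvPolynomial (ℕ × Fin n) K :=
  fun p => if p.1 = j then X p - nest H j p.2 else X p

lemma fone_inj (H : Fin n → MvPolynomial (Fin n) K) (j : ℕ) :
    Function.Injective (aeval (fone H j) :
      MvPolynomial (ℕ × Fin n) K → MvPolynomial (ℕ × Fin n) K) := by
  have hfix : ∀ q : ℕ × Fin n, q.1 < j → fone H j q = X q := by
    intro q hq; simp [fone, Nat.ne_of_lt hq]
  have hcomp : (aeval (gone H j)).comp (aeval (fone H j))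
      = (AlgHom.id K (MvPolynomial (ℕ × Fin n) K)) := by
    apply MvPolynomial.algHom_ext
    intro p
    rw [AlgHom.comp_apply, aeval_X, AlgHom.id_apply]
    by_cases hp : p.1 = j
    · rw [fone, if_pos hp, map_add, aeval_X, gone, if_pos hp,
        aeval_nest_eq H (gone H j) j (fun q hq => by simp [gone, Nat.ne_of_lt hq]) p.2]
      ring
    · rw [fone, if_neg hp, aeval_X, gone, if_neg hp]
  intro a b hab
  have := congrArg (aeval (gone H j)) hab
  rwa [← AlgHom.comp_apply, ← AlgHom.comp_apply, hcomp, AlgHom.id_apply,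
    AlgHom.id_apply] at this

lemma psi_step (H : Fin n → MvPolynomial (Fin n) K) (j : ℕ) :
    (aeval (fone H j)).comp (aeval (Fsub H j))
      = (aeval (Fsub H (j + 1)) :
          MvPolynomial (ℕ × Fin n) K →ₐ[K] MvPolynomial (ℕ × Fin n) K) := by
  apply MvPolynomial.algHom_ext
  intro p
  rw [AlgHom.comp_apply, aeval_X, aeval_X]
  by_cases h1 : p.1 < j
  · rw [Fsub, if_pos h1, map_add, aeval_X, fone, if_neg (Nat.ne_of_lt h1),
      aeval_nest_eq H (fone H j) p.1
        (fun q hq => by simp [fone, Nat.ne_of_lt (hq.trans h1)]) p.2,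
      Fsub, if_pos (h1.trans (Nat.lt_succ_self j))]
  · by_cases h2 : p.1 = j
    · rw [Fsub, if_neg h1, aeval_X, fone, if_pos h2, Fsub,
        if_pos (by rw [h2]; exact Nat.lt_succ_self j), h2]
    · rw [Fsub, if_neg h1, aeval_X, fone, if_neg h2, Fsub,
        if_neg (by omega)]

lemma psi_inj (H : Fin n → MvPolynomial (Fin n) K) (j : ℕ) :
    Function.Injective (aeval (Fsub H j) :
      MvPolynomial (ℕ × Fin n) K → MvPolynomial (ℕ × Fin n) K) := by
  induction j with
  | zero =>
    rw [Fsub_zero]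
    intro a b hab
    rwa [aeval_X_left_apply, aeval_X_left_apply] at hab
  | succ j ih =>
    intro a b hab
    apply ih
    apply fone_inj H j
    calc aeval (fone H j) (aeval (Fsub H j) a)
        = aeval (Fsub H (j + 1)) a := by rw [← AlgHom.comp_apply, psi_step]
      _ = aeval (Fsub H (j + 1)) b := hab
      _ = aeval (fone H j) (aeval (Fsub H j) b) := by rw [← AlgHom.comp_apply, psi_step]

lemma nest_pderiv (H : Fin n → MvPolynomial (Fin n) K) (j : ℕ) (hj : 1 ≤ j) (m k : Fin n) :
    pderiv ((0 : ℕ), k) (nest H j m) = headProd H j m k := by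
  have h := keyD H j m k
  rwa [map_add, pderiv_X_of_ne (by simp; omega), zero_add] at h

lemma tail_pderiv (H : Fin n → MvPolynomial (Fin n) K) (k : Fin n) :
    ∀ L : List ℕ, (∀ i ∈ L, 1 ≤ i) → ∀ ι m : Fin n,
      pderiv ((0 : ℕ), k) (((L.map (substN (jac H))).prod) ι m) = 0 := by
  intro L
  induction L with
  | nil =>
    intro _ ι m
    show pderiv ((0 : ℕ), k) ((1 : Matrix (Fin n) (Fin n) (MvPolynomial (ℕ × Fin n) K)) ι m) = 0
    rw [Matrix.one_apply]
    split_ifs <;> simp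
  | cons a L ih =>
    intro hL ι m
    rw [List.map_cons, List.prod_cons, Matrix.mul_apply, map_sum]
    refine Finset.sum_eq_zero fun m' _ => ?_
    rw [pderiv_mul, substN, Matrix.map_apply, pderiv_rename_ne a ((0 : ℕ), k)
        (by have := hL a List.mem_cons_self; omega) _,
      zero_mul, ih (fun i hi => hL i (List.mem_cons_of_mem a hi)) m' m, mul_zero, add_zero]

lemma psi_substN_ge (H : Fin n → MvPolynomial (Fin n) K) {j i : ℕ} (hij : j ≤ i) :
    (substN (jac H) i).map (aeval (Fsub H j)) = substN (jac H) i := by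
  refine Matrix.ext fun ι m => ?_
  rw [Matrix.map_apply, substN, Matrix.map_apply, aeval_rename]
  have hfun : (Fsub H j) ∘ (fun k : Fin n => ((i, k) : ℕ × Fin n))
      = (X : ℕ × Fin n → MvPolynomial (ℕ × Fin n) K) ∘ (fun k => (i, k)) :=
    funext fun k => if_neg (by simp; omega)
  rw [hfun]
  rw [← aeval_X_left_apply ((rename fun k : Fin n => ((i, k) : ℕ × Fin n)) (jac H ι m)),
    aeval_rename]

lemma psi_substN_lt (H : Fin n → MvPolynomial (Fin n) K) {j i : ℕ} (hij : i < j) :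
    (substN (jac H) i).map (aeval (Fsub H j)) = shiftJac H i := by
  refine Matrix.ext fun ι m => ?_
  rw [Matrix.map_apply, substN, Matrix.map_apply, aeval_rename,
    shiftJac, Matrix.map_apply]
  have hfun : (Fsub H j) ∘ (fun k : Fin n => ((i, k) : ℕ × Fin n))
      = fun k : Fin n => (X ((i : ℕ), k) : MvPolynomial (ℕ × Fin n) K) + nest H i k :=
    funext fun k => if_pos hij
  rw [hfun]

theorem stmt6 {K : Type} [Field K] [CharZero K] {n r : ℕ}
    (H : Fin n → MvPolynomial (Fin n) K)
    (hex : ∃ j : ℕ, 1 ≤ j ∧ j ≤ r ∧ ∀ i : Fin n, ∀ k : Fin n,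
      pderiv ((0 : ℕ), k) (((tailProd H j r).mulVec (nest H j)) i) = 0) :
    prodSubst (jac H) r = 0 := by
  classical
  obtain ⟨j, hj1, hjr, hyp⟩ := hex
  -- Step B : the transformed product vanishes
  have hmat : tailProd H j r * headProd H j = 0 := by
    refine Matrix.ext fun ι k => ?_
    have h := hyp ι k
    rw [Matrix.mulVec, dotProduct, map_sum] at h
    have h' : ∀ m : Fin n, pderiv ((0 : ℕ), k) (tailProd H j r ι m * nest H j m)
        = tailProd H j r ι m * headProd H j m k := by
      intro m
      rw [pderiv_mul, nest_pderiv H j hj1, tailProd,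
        tail_pderiv H k ((List.range' j (r - j)).reverse)
          (fun i hi => by
            rw [List.mem_reverse, List.mem_range'_1] at hi
            omega) ι m,
        zero_mul, zero_add]
    rw [Finset.sum_congr rfl (fun m _ => h' m)] at h
    rw [Matrix.mul_apply, Matrix.zero_apply]
    exact h
  -- Step C : the transformed product is the image of `prodSubst`
  have hsplit : (List.range r).reverse
      = (List.range' j (r - j)).reverse ++ (List.range j).reverse := by
    rw [← List.reverse_append]
    congr 1
    rw [List.range_eq_range', List.range_eq_range']
    have := List.range'_append_1 (s := 0) (m := j) (n := r - j)
    rw [Nat.zero_add] at this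
    rw [this]
    congr 1
    omega
  have himg : (prodSubst (jac H) r).map (aeval (Fsub H j))
      = tailProd H j r * headProd H j := by
    rw [prodSubst, ← AlgHom.mapMatrix_apply, map_list_prod, List.map_map, hsplit,
      List.map_append, List.prod_append]
    congr 1
    · rw [tailProd]
      apply congrArg
      refine List.map_congr_left fun i hi => ?_
      rw [List.mem_reverse, List.mem_range'_1] at hi
      show (substN (jac H) i).map (aeval (Fsub H j)) = _
      exact psi_substN_ge H (by omega)
    · rw [headProd]
      apply congrArg
      refine List.map_congr_left fun i hi => ?_
      rw [List.mem_reverse, List.mem_range] at hi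
      show (substN (jac H) i).map (aeval (Fsub H j)) = _
      exact psi_substN_lt H hi
  rw [hmat] at himg
  refine Matrix.ext fun ι m => ?_
  apply psi_inj H j
  have := congrFun (congrFun himg ι) m
  simpa [Matrix.map_apply] using this
end Aux
end

section
/- Fix d ≥ 2. For the homogeneous map H = (0, x₁ᵈ, x₁^{d−1}x₂, x₁^{d−2}x₂², 2x₁^{d−2}x₂x₃ − x₁^{d−1}x₄) in dimension 5 over ℚ, the Jacobian JH has ordinary nilpotency index 3 and strong nilpotency index 4. -/
open MvPolynomial

/-- The homogeneous degree-`d` map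
`H = (0, x₁ᵈ, x₁^{d−1}x₂, x₁^{d−2}x₂², 2x₁^{d−2}x₂x₃ − x₁^{d−1}x₄)` in dimension 5 over ℚ. -/
noncomputable def H10 (d : ℕ) : Fin 5 → MvPolynomial (Fin 5) ℚ :=
  ![0, X 0 ^ d, X 0 ^ (d - 1) * X 1, X 0 ^ (d - 2) * X 1 ^ 2,
    2 * X 0 ^ (d - 2) * X 1 * X 2 - X 0 ^ (d - 1) * X 3]

/-- The explicit Jacobian matrix of `H10 (e+2)`. -/
noncomputable def Mm (e : ℕ) : Matrix (Fin 5) (Fin 5) (MvPolynomial (Fin 5) ℚ) :=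
![![0,0,0,0,0],
  ![((e : MvPolynomial (Fin 5) ℚ)+2) * X 0 ^ (e+1), 0,0,0,0],
  ![((e : MvPolynomial (Fin 5) ℚ)+1) * (X 0 ^ e * X 1), X 0 ^ (e+1), 0,0,0],
  ![(e : MvPolynomial (Fin 5) ℚ) * (X 0 ^ (e-1) * X 1 ^ 2), 2 * (X 0 ^ e * X 1), 0,0,0],
  ![2*(e : MvPolynomial (Fin 5) ℚ) * (X 0 ^ (e-1) * X 1 * X 2)
      - ((e : MvPolynomial (Fin 5) ℚ)+1) * (X 0 ^ e * X 3),
    2*(X 0 ^ e * X 2), 2*(X 0 ^ e * X 1), -(X 0 ^ (e+1)), 0]]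

/-- The square of that Jacobian matrix. -/
noncomputable def Mm2 (e : ℕ) : Matrix (Fin 5) (Fin 5) (MvPolynomial (Fin 5) ℚ) :=
![![0,0,0,0,0],
  ![0,0,0,0,0],
  ![((e : MvPolynomial (Fin 5) ℚ)+2) * X 0 ^ (2*e+2), 0,0,0,0],
  ![2*((e : MvPolynomial (Fin 5) ℚ)+2) * (X 0 ^ (2*e+1) * X 1), 0,0,0,0],
  ![2*((e : MvPolynomial (Fin 5) ℚ)+2) * (X 0 ^ (2*e+1) * X 2)
      + 2*((e : MvPolynomial (Fin 5) ℚ)+1) * (X 0 ^ (2*e) * X 1 ^ 2)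
      - (e : MvPolynomial (Fin 5) ℚ) * (X 0 ^ (e+1) * X 0 ^ (e-1) * X 1 ^ 2), 0,0,0,0]]

/-- The renamed Jacobian matrix (tuple `t` of fresh variables). -/
noncomputable def Sm (t e : ℕ) : Matrix (Fin 5) (Fin 5) (MvPolynomial (ℕ × Fin 5) ℚ) :=
![![0,0,0,0,0],
  ![((e : MvPolynomial (ℕ × Fin 5) ℚ)+2) * X (t,0) ^ (e+1), 0,0,0,0],
  ![((e : MvPolynomial (ℕ × Fin 5) ℚ)+1) * (X (t,0) ^ e * X (t,1)), X (t,0) ^ (e+1), 0,0,0],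
  ![(e : MvPolynomial (ℕ × Fin 5) ℚ) * (X (t,0) ^ (e-1) * X (t,1) ^ 2),
    2 * (X (t,0) ^ e * X (t,1)), 0,0,0],
  ![2*(e : MvPolynomial (ℕ × Fin 5) ℚ) * (X (t,0) ^ (e-1) * X (t,1) * X (t,2))
      - ((e : MvPolynomial (ℕ × Fin 5) ℚ)+1) * (X (t,0) ^ e * X (t,3)),
    2*(X (t,0) ^ e * X (t,2)), 2*(X (t,0) ^ e * X (t,1)), -(X (t,0) ^ (e+1)), 0]]

/-- The product `S1 * S0`. -/
noncomputable def Rm (e : ℕ) : Matrix (Fin 5) (Fin 5) (MvPolynomial (ℕ × Fin 5) ℚ) :=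
![![0,0,0,0,0],
  ![0,0,0,0,0],
  ![((e : MvPolynomial (ℕ × Fin 5) ℚ)+2) * (X (1,0) ^ (e+1) * X (0,0) ^ (e+1)), 0,0,0,0],
  ![2*((e : MvPolynomial (ℕ × Fin 5) ℚ)+2) * (X (1,0) ^ e * X (1,1) * X (0,0) ^ (e+1)), 0,0,0,0],
  ![2*((e : MvPolynomial (ℕ × Fin 5) ℚ)+2) * (X (1,0) ^ e * X (1,2) * X (0,0) ^ (e+1))
      + 2*((e : MvPolynomial (ℕ × Fin 5) ℚ)+1) * (X (1,0) ^ e * X (1,1) * X (0,0) ^ e * X (0,1))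
      - (e : MvPolynomial (ℕ × Fin 5) ℚ) *
          (X (1,0) ^ (e+1) * X (0,0) ^ (e-1) * X (0,1) ^ 2),
    2 * (X (1,0) ^ e * X (1,1) * X (0,0) ^ (e+1))
      - 2 * (X (1,0) ^ (e+1) * X (0,0) ^ e * X (0,1)), 0,0,0]]

/-- The strong product `S2 * S1 * S0`. -/
noncomputable def Qm (e : ℕ) : Matrix (Fin 5) (Fin 5) (MvPolynomial (ℕ × Fin 5) ℚ) :=
![![0,0,0,0,0],
  ![0,0,0,0,0],
  ![0,0,0,0,0],
  ![0,0,0,0,0],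
  ![2*((e : MvPolynomial (ℕ × Fin 5) ℚ)+2) * (X (0,0) ^ (e+1) *
      (X (2,0) ^ e * X (2,1) * X (1,0) ^ (e+1) - X (2,0) ^ (e+1) * X (1,0) ^ e * X (1,1))),
    0,0,0,0]]

lemma pderiv_two (j : Fin 5) : pderiv j (2 : MvPolynomial (Fin 5) ℚ) = 0 := by
  rw [(map_ofNat (C : ℚ →+* MvPolynomial (Fin 5) ℚ) 2).symm, pderiv_C]

set_option linter.unusedTactic false in
lemma jac_eq (e : ℕ) : jac (H10 (e+2)) = Mm e := by
  have h1 : e + 2 - 1 = e + 1 := rfl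
  have h2 : e + 2 - 2 = e := rfl
  ext i j : 1
  fin_cases i <;> fin_cases j <;>
    simp [jac, H10, Mm, h1, h2, pderiv_mul, pderiv_pow, pderiv_two,
      Matrix.cons_val_three, Matrix.cons_val_four, Matrix.vecHead, Matrix.vecTail] <;>
    push_cast <;> ring

lemma sq_eq (e : ℕ) : Mm e * Mm e = Mm2 e := by
  ext i j : 1
  fin_cases i <;> fin_cases j <;>
    simp only [Matrix.mul_apply, Fin.sum_univ_five] <;>
    simp [Mm, Mm2, Matrix.mul_apply, Fin.sum_univ_five,
      Matrix.cons_val_three, Matrix.cons_val_four, Matrix.vecHead, Matrix.vecTail] <;>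
    ring

lemma cube_eq (e : ℕ) : Mm2 e * Mm e = 0 := by
  ext i j : 1
  fin_cases i <;> fin_cases j <;>
    simp only [Matrix.mul_apply, Fin.sum_univ_five] <;>
    simp [Mm, Mm2, Matrix.mul_apply, Fin.sum_univ_five,
      Matrix.cons_val_three, Matrix.cons_val_four, Matrix.vecHead, Matrix.vecTail] <;>
    ring

lemma subst_eq (t e : ℕ) : substN (Mm e) t = Sm t e := by
  ext i j : 1
  fin_cases i <;> fin_cases j <;>
    simp only [substN, Matrix.map_apply] <;>
    simp [substN, Mm, Sm, Matrix.map_apply, map_ofNat,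
      Matrix.cons_val_three, Matrix.cons_val_four, Matrix.vecHead, Matrix.vecTail]

set_option maxHeartbeats 2000000 in
lemma r_eq (e : ℕ) : Sm 1 e * Sm 0 e = Rm e := by
  ext i j : 1
  fin_cases i <;> fin_cases j <;>
    simp only [Matrix.mul_apply, Fin.sum_univ_five] <;>
    simp [Sm, Rm, Matrix.mul_apply, Fin.sum_univ_five,
      Matrix.cons_val_three, Matrix.cons_val_four, Matrix.vecHead, Matrix.vecTail] <;>
    ring

set_option maxHeartbeats 2000000 in
lemma q_eq (e : ℕ) : Sm 2 e * Rm e = Qm e := by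
  ext i j : 1
  fin_cases i <;> fin_cases j <;>
    simp only [Matrix.mul_apply, Fin.sum_univ_five] <;>
    simp [Sm, Rm, Qm, Matrix.mul_apply, Fin.sum_univ_five,
      Matrix.cons_val_three, Matrix.cons_val_four, Matrix.vecHead, Matrix.vecTail] <;>
    ring

set_option maxHeartbeats 2000000 in
lemma p_eq (e : ℕ) : Sm 3 e * Qm e = 0 := by
  ext i j : 1
  fin_cases i <;> fin_cases j <;>
    simp only [Matrix.mul_apply, Fin.sum_univ_five] <;>
    simp [Sm, Qm, Matrix.mul_apply, Fin.sum_univ_five,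
      Matrix.cons_val_three, Matrix.cons_val_four, Matrix.vecHead, Matrix.vecTail] <;>
    ring

theorem stmt10 (d : ℕ) (hd : 2 ≤ d) :
    (jac (H10 d)) ^ 3 = 0 ∧ (jac (H10 d)) ^ 2 ≠ 0 ∧
    substN (jac (H10 d)) 3 * substN (jac (H10 d)) 2 *
      substN (jac (H10 d)) 1 * substN (jac (H10 d)) 0 = 0 ∧
    substN (jac (H10 d)) 2 * substN (jac (H10 d)) 1 * substN (jac (H10 d)) 0 ≠ 0 := by
  obtain ⟨e, rfl⟩ : ∃ e, d = e + 2 := ⟨d - 2, by omega⟩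
  rw [jac_eq]
  refine ⟨?_, ?_, ?_, ?_⟩
  · rw [pow_succ, pow_two, sq_eq, cube_eq]
  · intro h
    have h20 : (Mm2 e) 2 0 = 0 := by rw [← sq_eq, ← pow_two, h]; rfl
    have h2 := congrArg (eval fun _ => (1:ℚ)) h20
    simp [Mm2] at h2
    have h3 : (0:ℚ) < (e:ℚ) + 2 := by positivity
    linarith
  · rw [subst_eq, subst_eq, subst_eq, subst_eq, Matrix.mul_assoc, r_eq, Matrix.mul_assoc,
      q_eq, p_eq]
  · rw [subst_eq, subst_eq, subst_eq, Matrix.mul_assoc, r_eq, q_eq]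
    intro h
    have h40 : (Qm e) 4 0 = 0 := by rw [h]; rfl
    have h2 := congrArg (eval fun p => if p = ((1:ℕ),(1: Fin 5)) then (0:ℚ) else 1) h40
    simp [Qm] at h2
    have h3 : (0:ℚ) < (e:ℚ) + 2 := by positivity
    linarith
end

section
/- Let D be a division ring, S a set, and M ∈ Mat_m(D^S) a matrix of functions from S to D with m ≥ 1. If there exists r ∈ ℕ such that M|_{v_r}·M|_{v_{r−1}}···M|_{v_1} = 0 for all v_1,...,v_r ∈ S, then M|_{v_m}·M|_{v_{m−1}}···M|_{v_1} = 0 for all v_1,...,v_m ∈ S. -/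
/-- Evaluate every entry of a matrix of functions `S → R` at `v : S`. -/
def evalM {R : Type} [Ring R] {S : Type} {m : ℕ}
    (M : Matrix (Fin m) (Fin m) (S → R)) (v : S) : Matrix (Fin m) (Fin m) R :=
  M.map fun f => f v

/-- The product `M|_{v_r} ⬝ M|_{v_{r-1}} ⬝ ⋯ ⬝ M|_{v_1}` (0-based: `v` indexed `r-1, …, 0`). -/
def evalProd {R : Type} [Ring R] {S : Type} {m r : ℕ}
    (M : Matrix (Fin m) (Fin m) (S → R)) (v : Fin r → S) : Matrix (Fin m) (Fin m) R :=
  ((List.ofFn fun i => evalM M (v i)).reverse).prod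

lemma evalProd_succ {R : Type} [Ring R] {S : Type} {m r : ℕ}
    (M : Matrix (Fin m) (Fin m) (S → R)) (v : Fin (r+1) → S) :
    evalProd M v = evalProd M (Fin.tail v) * evalM M (v 0) := by
  simp [evalProd, List.ofFn_succ, Fin.tail]

/-- Row space of all products of length `k`. -/
def Wk {D : Type} [DivisionRing D] {S : Type} {m : ℕ}
    (M : Matrix (Fin m) (Fin m) (S → D)) (k : ℕ) : Submodule D (Fin m → D) :=
  Submodule.span D {y | ∃ (v : Fin k → S) (x : Fin m → D), y = Matrix.vecMul x (evalProd M v)}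

lemma Wk_succ {D : Type} [DivisionRing D] {S : Type} {m : ℕ}
    (M : Matrix (Fin m) (Fin m) (S → D)) (k : ℕ) :
    Wk M (k+1) = ⨆ s : S, (Wk M k).map (Matrix.vecMulLinear (evalM M s)) := by
  apply le_antisymm
  · rw [Wk, Submodule.span_le]
    rintro y ⟨v, x, rfl⟩
    rw [evalProd_succ, ← Matrix.vecMul_vecMul]
    refine le_iSup (fun s : S => (Wk M k).map (Matrix.vecMulLinear (evalM M s))) (v 0) ?_
    exact ⟨Matrix.vecMul x (evalProd M (Fin.tail v)),
      Submodule.subset_span ⟨Fin.tail v, x, rfl⟩, rfl⟩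
  · refine iSup_le fun s => ?_
    rw [Wk, Submodule.map_span, Submodule.span_le]
    rintro y ⟨z, ⟨v, x, rfl⟩, rfl⟩
    refine Submodule.subset_span ⟨Fin.cons s v, x, ?_⟩
    rw [evalProd_succ, ← Matrix.vecMul_vecMul]
    simp [Fin.tail_cons]

lemma Wk_succ_le {D : Type} [DivisionRing D] {S : Type} {m : ℕ}
    (M : Matrix (Fin m) (Fin m) (S → D)) : ∀ k, Wk M (k+1) ≤ Wk M k := by
  intro k
  induction k with
  | zero => exact le_top.trans_eq (by
      symm
      rw [Wk, Submodule.eq_top_iff']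
      intro x
      exact Submodule.subset_span ⟨Fin.elim0, x, by simp [evalProd]⟩)
  | succ k ih =>
      exact (Wk_succ M (k+1)).trans_le
        ((iSup_mono fun s => Submodule.map_mono ih).trans_eq (Wk_succ M k).symm)

lemma Wk_stab {D : Type} [DivisionRing D] {S : Type} {m : ℕ}
    (M : Matrix (Fin m) (Fin m) (S → D)) {k : ℕ} (hk : Wk M (k+1) = Wk M k) :
    ∀ j, k ≤ j → Wk M j = Wk M k := by
  intro j hj
  induction j with
  | zero => obtain rfl : k = 0 := Nat.le_zero.mp hj; rfl
  | succ j ih =>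
      rcases Nat.lt_or_ge j k with hlt | hge
      · obtain rfl : k = j + 1 := by omega
        rfl
      · rw [Wk_succ, ih hge, ← Wk_succ, hk]

theorem stmt12 {D : Type} [DivisionRing D] {S : Type} {m : ℕ} (hm : 1 ≤ m)
    (M : Matrix (Fin m) (Fin m) (S → D))
    (h : ∃ r : ℕ, ∀ v : Fin r → S, evalProd M v = 0) :
    ∀ v : Fin m → S, evalProd M v = 0 := by
  obtain ⟨r, hr⟩ := h
  have hWr : Wk M r = ⊥ := by
    rw [Wk, Submodule.span_eq_bot]
    rintro y ⟨v, x, rfl⟩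
    rw [hr v, Matrix.vecMul_zero]
  -- key claim: for every k, Wk M k = ⊥ or finrank ≤ m - k
  have key : ∀ k, Wk M k = ⊥ ∨ Module.finrank D (Wk M k) ≤ m - k := by
    intro k
    induction k with
    | zero =>
        right
        simpa using (Submodule.finrank_le (Wk M 0)).trans_eq (by simp)
    | succ k ih =>
        rcases ih with hbot | hle
        · left
          exact le_bot_iff.mp (hbot ▸ Wk_succ_le M k)
        · by_cases heq : Wk M (k+1) = Wk M k
          · left
            rcases le_or_gt r k with hrk | hkr
            · have := antitone_nat_of_succ_le (Wk_succ_le M) hrk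
              rw [hWr] at this
              rw [heq]
              exact le_bot_iff.mp this
            · rw [heq, ← Wk_stab M heq r (by omega), hWr]
          · right
            have hlt : Wk M (k+1) < Wk M k := lt_of_le_of_ne (Wk_succ_le M k) heq
            have := Submodule.finrank_lt_finrank_of_lt hlt
            omega
  rcases key m with hbot | hle
  · intro v
    have hmem : ∀ x : Fin m → D, Matrix.vecMul x (evalProd M v) = 0 := by
      intro x
      have : Matrix.vecMul x (evalProd M v) ∈ Wk M m := Submodule.subset_span ⟨v, x, rfl⟩
      simpa [hbot] using this
    ext i j
    have := congr_fun (hmem (Pi.single i 1)) j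
    rwa [Matrix.single_one_vecMul] at this
  · -- finrank ≤ m - m = 0 forces ⊥, then same argument
    have hbot : Wk M m = ⊥ := by
      have h0 : Module.finrank D (Wk M m) = 0 := by omega
      exact Submodule.finrank_eq_zero.mp h0
    intro v
    have hmem : ∀ x : Fin m → D, Matrix.vecMul x (evalProd M v) = 0 := by
      intro x
      have : Matrix.vecMul x (evalProd M v) ∈ Wk M m := Submodule.subset_span ⟨v, x, rfl⟩
      simpa [hbot] using this
    ext i j
    have := congr_fun (hmem (Pi.single i 1)) j
    rwa [Matrix.single_one_vecMul] at this
end
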